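/- Let V be a finite-dimensional real inner product space, R an algebraic curvature tensor on V, and ε ∈ ℝ such that R(y,x,x,y) ≥ ε for all orthonormal x,y ∈ V. Suppose v,w ∈ V are orthonormal and R(w,v,v,u) = ε·⟨w,u⟩ for all u ∈ V. Then for every t ∈ ℝ, setting c(t) = cos(t)·v + sin(t)·w and c'(t) = -sin(t)·v + cos(t)·w, one has R(c'(t), c(t), c(t), u) = ε·⟨c'(t), u⟩ for all u ∈ V. -/

import Mathlib

open scoped RealInnerProductSpace

set_option maxHeartbeats 1000000 in
/-- If `w` is an `ε`-eigenvector of the Jacobi operator `𝒥_v` (with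
`sec ≥ ε`), then along the great circle `c(t) = cos t · v + sin t · w` the velocity
`c'(t)` remains an `ε`-eigenvector of `𝒥_{c(t)}`. -/
theorem stmt_2
    {V : Type*} [NormedAddCommGroup V] [InnerProductSpace ℝ V] [FiniteDimensional ℝ V]
    (R : V →ₗ[ℝ] V →ₗ[ℝ] V →ₗ[ℝ] V →ₗ[ℝ] ℝ)
    (hskew : ∀ X Y Z W : V, R X Y Z W = - R Y X Z W)
    (hpair : ∀ X Y Z W : V, R X Y Z W = R Z W X Y)
    (ε : ℝ)
    (hsec : ∀ x y : V, ‖x‖ = 1 → ‖y‖ = 1 → ⟪x, y⟫ = 0 → ε ≤ R y x x y)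
    (v w : V) (hv : ‖v‖ = 1) (hw : ‖w‖ = 1) (hvw : ⟪v, w⟫ = 0)
    (heig : ∀ u : V, R w v v u = ε * ⟪w, u⟫) :
    ∀ t : ℝ, ∀ u : V,
      R (-(Real.sin t) • v + Real.cos t • w)
        (Real.cos t • v + Real.sin t • w)
        (Real.cos t • v + Real.sin t • w) u
      = ε * ⟪-(Real.sin t) • v + Real.cos t • w, u⟫ := by
  have hvv : ⟪v, v⟫ = (1:ℝ) := by
    rw [real_inner_self_eq_norm_sq, hv]; norm_num
  have hww : ⟪w, w⟫ = (1:ℝ) := by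
    rw [real_inner_self_eq_norm_sq, hw]; norm_num
  have hskew' : ∀ X Y Z W : V, R X Y Z W = - R X Y W Z := by
    intro X Y Z W
    rw [hpair X Y Z W, hskew Z W X Y, hpair W Z X Y]
  have hXX : ∀ X Z W : V, R X X Z W = 0 := by
    intro X Z W; have := hskew X X Z W; linarith
  have hZZ : ∀ X Y Z : V, R X Y Z Z = 0 := by
    intro X Y Z; have := hskew' X Y Z Z; linarith
  have hRwvvw : R w v v w = ε := by rw [heig w, hww]; ring
  -- Step 1: for unit u orthogonal to v and w, the mixed term vanishes
  have key0 : ∀ u : V, ‖u‖ = 1 → ⟪v, u⟫ = 0 → ⟪w, u⟫ = 0 → R w u v w = 0 := by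
    intro u hu hvu hwu
    have huu : ⟪u, u⟫ = (1:ℝ) := by rw [real_inner_self_eq_norm_sq, hu]; norm_num
    have huv : ⟪u, v⟫ = 0 := by rw [real_inner_comm]; exact hvu
    have huw : ⟪u, w⟫ = 0 := by rw [real_inner_comm]; exact hwu
    set a : ℝ := R w u v w with ha
    set b : ℝ := R w u u w with hb
    have hsym : R w v u w = a := by
      have h1 : R w v u w = R u w w v := hpair w v u w
      have h2 : R u w w v = - R w u w v := hskew u w w v
      have h3 : R w u v w = - R w u w v := hskew' w u v w
      rw [h1, h2]; linarith
    -- the function along a rotation in the (v,u)-plane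
    have hφ : ∀ s : ℝ,
        ε ≤ ε * Real.cos s ^ 2 + 2 * a * (Real.sin s * Real.cos s) + b * Real.sin s ^ 2 := by
      intro s
      set x : V := Real.cos s • v + Real.sin s • u with hx
      have hxx : ⟪x, x⟫ = (1:ℝ) := by
        simp only [hx, inner_add_left, inner_add_right, real_inner_smul_left,
          real_inner_smul_right, hvv, huu, hvu, huv]
        nlinarith [Real.sin_sq_add_cos_sq s]
      have hxnorm : ‖x‖ = 1 := by
        have h2 : ‖x‖ ^ 2 = 1 := by rw [← real_inner_self_eq_norm_sq, hxx]
        nlinarith [norm_nonneg x]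
      have hxw : ⟪x, w⟫ = 0 := by
        simp [hx, inner_add_left, real_inner_smul_left, hvw, huw]
      have h := hsec x w hxnorm hw hxw
      have hexp : R w x x w
          = ε * Real.cos s ^ 2 + 2 * a * (Real.sin s * Real.cos s) + b * Real.sin s ^ 2 := by
        simp only [hx, map_add, map_smul, LinearMap.add_apply, LinearMap.smul_apply,
          smul_eq_mul]
        rw [hRwvvw, hsym]
        ring
      linarith [hexp ▸ h]
    -- derivative of the curvature along the rotation at s = 0 is 2a, and 0 is a min
    have hmin : IsLocalMin
        (fun s : ℝ => ε * Real.cos s ^ 2 + 2 * a * (Real.sin s * Real.cos s)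
          + b * Real.sin s ^ 2) 0 := by
      have h0 : ∀ s : ℝ, ε * Real.cos 0 ^ 2 + 2 * a * (Real.sin 0 * Real.cos 0)
          + b * Real.sin 0 ^ 2 ≤ ε * Real.cos s ^ 2 + 2 * a * (Real.sin s * Real.cos s)
          + b * Real.sin s ^ 2 := by
        intro s; simpa using hφ s
      exact Filter.Eventually.filter_mono le_rfl (Filter.Eventually.of_forall h0)
    have hderiv : HasDerivAt
        (fun s : ℝ => ε * Real.cos s ^ 2 + 2 * a * (Real.sin s * Real.cos s)
          + b * Real.sin s ^ 2) (2 * a) 0 := by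
      have h1 : HasDerivAt (fun s : ℝ => Real.cos s ^ 2) 0 0 := by
        have := (Real.hasDerivAt_cos 0).fun_pow 2
        simpa using this
      have h2 : HasDerivAt (fun s : ℝ => Real.sin s * Real.cos s) 1 0 := by
        have := (Real.hasDerivAt_sin 0).fun_mul (Real.hasDerivAt_cos 0)
        simpa using this
      have h3 : HasDerivAt (fun s : ℝ => Real.sin s ^ 2) 0 0 := by
        have := (Real.hasDerivAt_sin 0).fun_pow 2
        simpa using this
      have := ((h1.const_mul ε).fun_add (h2.const_mul (2 * a))).fun_add (h3.const_mul b)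
      simpa using this
    have h2a : (2 : ℝ) * a = 0 := hmin.hasDerivAt_eq_zero hderiv
    linarith
  -- Step 2: remove the normalization
  have key1 : ∀ u : V, ⟪v, u⟫ = 0 → ⟪w, u⟫ = 0 → R w v w u = 0 := by
    intro u hvu hwu
    have hto : ∀ u : V, ‖u‖ = 1 → ⟪v, u⟫ = 0 → ⟪w, u⟫ = 0 → R w v w u = 0 := by
      intro u hu h1 h2
      have ha := key0 u hu h1 h2
      have h3 : R w u v w = - R w u w v := hskew' w u v w
      have h4 : R w v w u = R w u w v := hpair w v w u
      rw [h4]; linarith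
    rcases eq_or_ne u 0 with rfl | hne
    · simp
    · have hn : ‖u‖ ≠ 0 := norm_ne_zero_iff.mpr hne
      have hu' : ‖(‖u‖⁻¹ • u)‖ = 1 := by
        rw [norm_smul]; simp [abs_of_nonneg (norm_nonneg u)]
        field_simp
      have h1 : ⟪v, ‖u‖⁻¹ • u⟫ = 0 := by rw [real_inner_smul_right, hvu]; ring
      have h2 : ⟪w, ‖u‖⁻¹ • u⟫ = 0 := by rw [real_inner_smul_right, hwu]; ring
      have := hto _ hu' h1 h2
      rw [map_smul, smul_eq_mul] at this
      rcases mul_eq_zero.mp this with h | h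
      · exact absurd h (inv_ne_zero hn)
      · exact h
  -- Step 3: the full identity R w v w u = -ε⟪v,u⟫
  have key : ∀ u : V, R w v w u = -(ε * ⟪v, u⟫) := by
    intro u
    have hdecomp : u = ⟪v, u⟫ • v + ⟪w, u⟫ • w + (u - ⟪v, u⟫ • v - ⟪w, u⟫ • w) := by
      abel
    have hwv : ⟪w, v⟫ = 0 := by rw [real_inner_comm]; exact hvw
    have hr1 : ⟪v, u - ⟪v, u⟫ • v - ⟪w, u⟫ • w⟫ = 0 := by
      simp [inner_sub_right, real_inner_smul_right, hvv, hvw, hv]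
    have hr2 : ⟪w, u - ⟪v, u⟫ • v - ⟪w, u⟫ • w⟫ = 0 := by
      simp [inner_sub_right, real_inner_smul_right, hww, hwv, hw]
    have hrest := key1 _ hr1 hr2
    have hwvwv : R w v w v = -ε := by
      have := hskew' w v v w
      rw [hRwvvw] at this
      linarith
    have hwvww : R w v w w = 0 := hZZ w v w
    calc R w v w u
        = R w v w (⟪v, u⟫ • v + ⟪w, u⟫ • w + (u - ⟪v, u⟫ • v - ⟪w, u⟫ • w)) := by
          rw [← hdecomp]
      _ = ⟪v, u⟫ * R w v w v + ⟪w, u⟫ * R w v w w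
            + R w v w (u - ⟪v, u⟫ • v - ⟪w, u⟫ • w) := by
          simp [map_add, map_smul, smul_eq_mul]
      _ = -(ε * ⟪v, u⟫) := by rw [hwvwv, hwvww, hrest]; ring
  -- Final computation
  intro t u
  have hA : R v v v u = 0 := hXX v v u
  have hB : R v v w u = 0 := hXX v w u
  have hC : R w w v u = 0 := hXX w v u
  have hD : R w w w u = 0 := hXX w w u
  have hE : R v w v u = -(ε * ⟪w, u⟫) := by
    have h1 := hskew v w v u; have h2 := heig u; linarith
  have hF : R v w w u = ε * ⟪v, u⟫ := by
    have h1 := hskew v w w u; have h2 := key u; linarith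
  have hG : R w v v u = ε * ⟪w, u⟫ := heig u
  have hH : R w v w u = -(ε * ⟪v, u⟫) := key u
  simp only [map_add, map_smul, LinearMap.add_apply, LinearMap.smul_apply, smul_eq_mul,
    map_neg, LinearMap.neg_apply, inner_add_left, inner_neg_left,
    real_inner_smul_left, hA, hB, hC, hD, hE, hF, hG, hH]
  linear_combination (ε * (Real.cos t * ⟪w, u⟫ - Real.sin t * ⟪v, u⟫)) *
    Real.sin_sq_add_cos_sq t
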